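/- Let (E, 𝓐, μ) be a σ-finite measure space and let F : E×E → (0,∞) be a measurable symmetric (F(x,y) = F(y,x)) probability density with respect to μ⊗μ such that F·log F is (μ⊗μ)-integrable and (Π_μ F)·log(Π_μ F) is μ-integrable, where Π_μ F(x) = ∫_E F(x,y) dμ(y). Then H(F) ≥ 2·h(Π_μ F), i.e., ∫_{E×E} F·log F d(μ⊗μ) ≥ 2·∫_E (Π_μ F)·log(Π_μ F) dμ. -/
import Mathlib


open MeasureTheory

/-- Projection inequality for the entropy: for a symmetric strictly
positive probability density `F` on `E×E` with `F log F` integrable and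
`(Π_μ F) log(Π_μ F)` integrable, one has `H(F) ≥ 2 h(Π_μ F)`. -/
theorem entropy_projection_ge {E : Type*} [MeasurableSpace E]
    (μ : Measure E) [SigmaFinite μ]
    (F : E × E → ℝ) (hF : Measurable F) (hFpos : ∀ p, 0 < F p)
    (hFsymm : ∀ x y, F (x, y) = F (y, x))
    (hFint : Integrable F (μ.prod μ)) (hF1 : ∫ p, F p ∂(μ.prod μ) = 1)
    (hFent : Integrable (fun p => F p * Real.log (F p)) (μ.prod μ))
    (hPent : Integrable
      (fun x => (∫ y, F (x, y) ∂μ) * Real.log (∫ y, F (x, y) ∂μ)) μ) :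
    ∫ p, F p * Real.log (F p) ∂(μ.prod μ)
      ≥ 2 * ∫ x, (∫ y, F (x, y) ∂μ) * Real.log (∫ y, F (x, y) ∂μ) ∂μ := by
  set P : E → ℝ := fun x => ∫ y, F (x, y) ∂μ with hPdef
  have hμ : μ ≠ 0 := by
    rintro rfl
    simp at hF1
  have hPmeas : Measurable P := hF.stronglyMeasurable.integral_prod_right'.measurable
  have hPint : Integrable P μ := hFint.integral_prod_left
  have hPone : ∫ x, P x ∂μ = 1 := by
    rw [hPdef, ← integral_prod _ hFint]; exact hF1
  have hsec : ∀ᵐ x ∂μ, Integrable (fun y => F (x, y)) μ := hFint.prod_right_ae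
  have hPpos : ∀ᵐ x ∂μ, 0 < P x := by
    filter_upwards [hsec] with x hx
    refine (integral_pos_iff_support_of_nonneg (fun y => (hFpos _).le) hx).2 ?_
    have hsupp : Function.support (fun y => F (x, y)) = Set.univ := by
      ext y; simp [(hFpos (x, y)).ne']
    rw [hsupp]
    exact Measure.measure_univ_pos.mpr hμ
  -- integrability of p ↦ F p * log (P p.1)
  have hg1meas : Measurable (fun p : E × E => F p * Real.log (P p.1)) :=
    hF.mul ((Real.measurable_log.comp hPmeas).comp measurable_fst)
  have hg1int : Integrable (fun p : E × E => F p * Real.log (P p.1)) (μ.prod μ) := by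
    rw [integrable_prod_iff hg1meas.aestronglyMeasurable]
    constructor
    · filter_upwards [hsec] with x hx
      exact hx.mul_const _
    · have heq : (fun x => ∫ y, ‖F (x, y) * Real.log (P x)‖ ∂μ)
          =ᵐ[μ] fun x => ‖P x * Real.log (P x)‖ := by
        filter_upwards [hsec, hPpos] with x hx hxp
        have h1 : ∀ y, ‖F (x, y) * Real.log (P x)‖ = F (x, y) * |Real.log (P x)| := by
          intro y
          rw [norm_mul, Real.norm_eq_abs, Real.norm_eq_abs, abs_of_pos (hFpos _)]
        simp only [h1]
        rw [integral_mul_const, norm_mul, Real.norm_eq_abs, Real.norm_eq_abs,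
          abs_of_pos hxp]
      exact hPent.norm.congr heq.symm
  have hg1eq : ∫ p, F p * Real.log (P p.1) ∂(μ.prod μ)
      = ∫ x, P x * Real.log (P x) ∂μ := by
    rw [integral_prod _ hg1int]
    refine integral_congr_ae ?_
    filter_upwards with x
    exact integral_mul_const _ _
  -- the swapped version
  have hswap : MeasurePreserving Prod.swap (μ.prod μ) (μ.prod μ) :=
    Measure.measurePreserving_swap
  have hg2comp : ∀ p : E × E,
      F p.swap * Real.log (P (p.swap).1) = F p * Real.log (P p.2) := by
    rintro ⟨x, y⟩
    simp [Prod.swap, hFsymm y x]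
  have hg2int : Integrable (fun p : E × E => F p * Real.log (P p.2)) (μ.prod μ) := by
    have h := (hswap.integrable_comp_emb
      MeasurableEquiv.prodComm.measurableEmbedding).2 hg1int
    exact h.congr (Filter.Eventually.of_forall fun p => hg2comp p)
  have hg2eq : ∫ p, F p * Real.log (P p.2) ∂(μ.prod μ)
      = ∫ x, P x * Real.log (P x) ∂μ := by
    rw [← hg1eq]
    rw [← hswap.integral_comp MeasurableEquiv.prodComm.measurableEmbedding
      (fun p : E × E => F p * Real.log (P p.1))]
    refine integral_congr_ae (Filter.Eventually.of_forall ?_)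
    intro p
    exact (hg2comp p).symm
  -- product of marginals
  have hqint : Integrable (fun p : E × E => P p.1 * P p.2) (μ.prod μ) :=
    hPint.mul_prod hPint
  have hqeq : ∫ p, P p.1 * P p.2 ∂(μ.prod μ) = 1 := by
    rw [integral_prod_mul, hPone, one_mul]
  -- positivity of P on both coordinates a.e.
  have hPpos2 : ∀ᵐ p ∂(μ.prod μ), 0 < P p.1 ∧ 0 < P p.2 := by
    have h1 : ∀ᵐ p ∂(μ.prod μ), 0 < P p.1 :=
      (Measure.quasiMeasurePreserving_fst (μ := μ) (ν := μ)).ae hPpos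
    have h2 : ∀ᵐ p ∂(μ.prod μ), 0 < P p.2 :=
      (Measure.quasiMeasurePreserving_snd (μ := μ) (ν := μ)).ae hPpos
    exact h1.and h2
  -- pointwise inequality
  have hkey : ∀ᵐ p ∂(μ.prod μ),
      F p * Real.log (P p.1) + F p * Real.log (P p.2) + (F p - P p.1 * P p.2)
        ≤ F p * Real.log (F p) := by
    filter_upwards [hPpos2] with p hp
    obtain ⟨h1, h2⟩ := hp
    set a := F p with ha
    set b := P p.1 * P p.2 with hb
    have hapos : 0 < a := hFpos p
    have hbpos : 0 < b := mul_pos h1 h2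
    have hlog : Real.log (b / a) ≤ b / a - 1 :=
      Real.log_le_sub_one_of_pos (div_pos hbpos hapos)
    have hdiv : Real.log (b / a) = Real.log b - Real.log a :=
      Real.log_div hbpos.ne' hapos.ne'
    have hlogb : Real.log b = Real.log (P p.1) + Real.log (P p.2) :=
      Real.log_mul h1.ne' h2.ne'
    have hmul : a * Real.log (b / a) ≤ a * (b / a - 1) :=
      mul_le_mul_of_nonneg_left hlog hapos.le
    have : a * (b / a - 1) = b - a := by field_simp
    nlinarith [hmul]
  have hleft : Integrable (fun p : E × E =>
      F p * Real.log (P p.1) + F p * Real.log (P p.2) + (F p - P p.1 * P p.2))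
      (μ.prod μ) := (hg1int.add hg2int).add (hFint.sub hqint)
  have hmono := integral_mono_ae hleft hFent hkey
  have e1 : ∫ p, (F p * Real.log (P p.1) + F p * Real.log (P p.2)
        + (F p - P p.1 * P p.2)) ∂(μ.prod μ)
      = (∫ p, F p * Real.log (P p.1) ∂(μ.prod μ))
        + (∫ p, F p * Real.log (P p.2) ∂(μ.prod μ))
        + ((∫ p, F p ∂(μ.prod μ)) - ∫ p, P p.1 * P p.2 ∂(μ.prod μ)) := by
    have hsum1 : Integrable (fun p : E × E =>
        F p * Real.log (P p.1) + F p * Real.log (P p.2)) (μ.prod μ) :=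
      hg1int.add hg2int
    have hsum2 : Integrable (fun p : E × E => F p - P p.1 * P p.2) (μ.prod μ) :=
      hFint.sub hqint
    rw [integral_add hsum1 hsum2, integral_add hg1int hg2int,
      integral_sub hFint hqint]
  rw [e1, hg1eq, hg2eq, hF1, hqeq] at hmono
  have : ∫ x, (∫ y, F (x, y) ∂μ) * Real.log (∫ y, F (x, y) ∂μ) ∂μ
      = ∫ x, P x * Real.log (P x) ∂μ := rfl
  rw [ge_iff_le, this]
  linarith
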